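/- arXiv:1905.13228 — 4 statements merged into one kernel-verified Lean document; each statement's English description precedes it below -/
import Mathlib

section
/- Let G be a finite bipartite graph with bipartition (U, W) that is (d_u, d_w)-regular, let {X_1, …, X_ℓ, Y} be a Godsil–McKay switching partition of its vertex set, and let G' be the switched graph. Then G' is also a (d_u, d_w)-regular bipartite graph with the same degree sequences as G; precisely, there is a partition (U', W') of the vertex set with |U'| = |U| and |W'| = |W| such that every edge of G' joins a vertex of U' to a vertex of W', every vertex of U' has degree d_u in G', and every vertex of W' has degree d_w in G'. -/
open Finset SimpleGraph Polynomial

set_option linter.unusedSectionVars false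

open scoped Classical in
/-- Number of neighbors of `v` inside the finset `S`, in the graph `G`. -/
noncomputable def nbrsIn {V : Type*} (G : SimpleGraph V) (v : V) (S : Finset V) : ℕ :=
  (S.filter (fun w => G.Adj v w)).card

/-- The `i`-th part `X_i` of a partition of the vertex set encoded by `f`
(`f v = some i` means `v ∈ X_i`, and `f v = none` means `v ∈ Y`). -/
def Xset {V : Type*} [Fintype V] {ℓ : ℕ} (f : V → Option (Fin ℓ)) (i : Fin ℓ) : Finset V :=
  Finset.univ.filter (fun v => f v = some i)

/-- The part `Y` of the partition of the vertex set encoded by `f`. -/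
def Yset {V : Type*} [Fintype V] {ℓ : ℕ} (f : V → Option (Fin ℓ)) : Finset V :=
  Finset.univ.filter (fun v => f v = none)

/-- The partition `{X_1, …, X_ℓ, Y}` (encoded by `f`) is a Godsil–McKay switching partition
of `G`: every `y ∈ Y` has `0`, `|X_i|/2` or `|X_i|` neighbors in each `X_i`, and for all `i, j`,
all vertices of `X_i` have the same number of neighbors in `X_j`. -/
def IsGMPartition {V : Type*} [Fintype V] (G : SimpleGraph V) {ℓ : ℕ}
    (f : V → Option (Fin ℓ)) : Prop :=
  (∀ y ∈ Yset f, ∀ i : Fin ℓ,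
      nbrsIn G y (Xset f i) = 0 ∨ 2 * nbrsIn G y (Xset f i) = (Xset f i).card ∨
        nbrsIn G y (Xset f i) = (Xset f i).card) ∧
  (∀ i j : Fin ℓ, ∀ u ∈ Xset f i, ∀ v ∈ Xset f i,
      nbrsIn G u (Xset f j) = nbrsIn G v (Xset f j))

/-- The pairs of vertices whose adjacency is flipped by the Godsil–McKay switching:
one of them lies in `Y`, the other in some `X_i`, and the former has exactly `|X_i|/2`
neighbors in `X_i`. -/
def gmFlip {V : Type*} [Fintype V] (G : SimpleGraph V) {ℓ : ℕ} (f : V → Option (Fin ℓ))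
    (u v : V) : Prop :=
  (∃ i : Fin ℓ, f u = none ∧ f v = some i ∧ 2 * nbrsIn G u (Xset f i) = (Xset f i).card) ∨
  (∃ i : Fin ℓ, f v = none ∧ f u = some i ∧ 2 * nbrsIn G v (Xset f i) = (Xset f i).card)

/-- The Godsil–McKay switched graph `G'`: adjacency within `X_1 ∪ … ∪ X_ℓ`, or within `Y`,
is as in `G`; adjacency between `y ∈ Y` and `x ∈ X_i` is complemented exactly when `y` has
`|X_i|/2` neighbors in `X_i` in `G`. -/
def gmSwitch {V : Type*} [Fintype V] (G : SimpleGraph V) {ℓ : ℕ} (f : V → Option (Fin ℓ)) :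
    SimpleGraph V where
  Adj u v := (gmFlip G f u v ∧ ¬ G.Adj u v ∧ u ≠ v) ∨ (¬ gmFlip G f u v ∧ G.Adj u v)
  symm := by
    constructor
    intro u v h
    have hsymm : gmFlip G f u v ↔ gmFlip G f v u := ⟨Or.symm, Or.symm⟩
    rcases h with ⟨h1, h2, h3⟩ | ⟨h1, h2⟩
    · exact Or.inl ⟨hsymm.mp h1, fun h => h2 (G.adj_symm h), h3.symm⟩
    · exact Or.inr ⟨fun h => h1 (hsymm.mpr h), G.adj_symm h2⟩
  loopless := by
    constructor
    intro u h
    rcases h with ⟨_, _, h3⟩ | ⟨_, h2⟩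
    · exact h3 rfl
    · exact G.irrefl h2

/-- `(U, W)` is a bipartition of the vertex set of `G` witnessing that `G` is a
`(du, dw)`-regular bipartite graph: every edge joins `U` to `W`, every vertex of `U` has
degree `du`, and every vertex of `W` has degree `dw`. -/
def IsBiRegularBipartition {V : Type*} [Fintype V] [DecidableEq V] (G : SimpleGraph V)
    (U W : Finset V) (du dw : ℕ) : Prop :=
  U ∪ W = Finset.univ ∧ U ∩ W = ∅ ∧
  (∀ u v, G.Adj u v → (u ∈ U ∧ v ∈ W) ∨ (u ∈ W ∧ v ∈ U)) ∧
  (∀ u ∈ U, nbrsIn G u Finset.univ = du) ∧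
  (∀ w ∈ W, nbrsIn G w Finset.univ = dw)

section Basics
variable {V : Type*} [DecidableEq V] (G : SimpleGraph V)

open scoped Classical

lemma nbrsIn_le_card (v : V) (S : Finset V) : nbrsIn G v S ≤ S.card :=
  Finset.card_le_card (Finset.filter_subset _ _)

lemma nbrsIn_union (v : V) {S T : Finset V} (h : Disjoint S T) :
    nbrsIn G v (S ∪ T) = nbrsIn G v S + nbrsIn G v T := by
  classical
  unfold nbrsIn
  rw [Finset.filter_union]
  exact Finset.card_union_of_disjoint (h.mono (Finset.filter_subset _ _) (Finset.filter_subset _ _))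

lemma nbrsIn_eq_zero_of_forall (v : V) {S : Finset V} (h : ∀ w ∈ S, ¬ G.Adj v w) :
    nbrsIn G v S = 0 := by
  unfold nbrsIn
  rw [Finset.card_eq_zero, Finset.filter_eq_empty_iff]
  exact h

lemma nbrsIn_pos_iff (v : V) (S : Finset V) :
    0 < nbrsIn G v S ↔ ∃ w ∈ S, G.Adj v w := by
  unfold nbrsIn
  rw [Finset.card_pos]
  constructor
  · rintro ⟨w, hw⟩; simp only [Finset.mem_filter] at hw; exact ⟨w, hw.1, hw.2⟩
  · rintro ⟨w, h1, h2⟩; exact ⟨w, Finset.mem_filter.2 ⟨h1, h2⟩⟩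

lemma nbrsIn_mono (v : V) {S T : Finset V} (h : S ⊆ T) : nbrsIn G v S ≤ nbrsIn G v T :=
  Finset.card_le_card (Finset.filter_subset_filter _ h)

lemma nbrsIn_congr_subset (v : V) {S T : Finset V} (hST : S ⊆ T)
    (h : ∀ w ∈ T, G.Adj v w → w ∈ S) : nbrsIn G v T = nbrsIn G v S := by
  unfold nbrsIn
  congr 1
  apply Finset.Subset.antisymm
  · intro w hw
    simp only [Finset.mem_filter] at hw ⊢
    exact ⟨h w hw.1 hw.2, hw.2⟩
  · intro w hw
    simp only [Finset.mem_filter] at hw ⊢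
    exact ⟨hST hw.1, hw.2⟩

lemma nbrsIn_double_count (S T : Finset V) :
    ∑ y ∈ S, nbrsIn G y T = ∑ x ∈ T, nbrsIn G x S := by
  unfold nbrsIn
  simp only [Finset.card_filter]
  rw [Finset.sum_comm]
  congr 1; ext x; congr 1; ext y
  simp [SimpleGraph.adj_comm]

lemma nbrsIn_sum_fiber {ℓ : ℕ} [Fintype V] (f : V → Option (Fin ℓ)) (v : V) (S : Finset V) :
    nbrsIn G v S = nbrsIn G v (S ∩ Yset f) + ∑ i, nbrsIn G v (S ∩ Xset f i) := by
  classical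
  have h : nbrsIn G v S = ∑ o : Option (Fin ℓ),
      nbrsIn G v (S ∩ Finset.univ.filter (fun w => f w = o)) := by
    unfold nbrsIn
    rw [Finset.card_eq_sum_card_fiberwise (f := f) (t := Finset.univ) (fun x _ => Finset.mem_univ _)]
    congr 1; ext o
    congr 1
    ext w
    simp only [Finset.mem_filter, Finset.mem_inter, Finset.mem_univ]
    tauto
  rw [h, Fintype.sum_option]
  rfl

end Basics

section Main
variable {V : Type*} [Fintype V] [DecidableEq V] {G : SimpleGraph V} {U W : Finset V}
  {du dw : ℕ} {ℓ : ℕ} {f : V → Option (Fin ℓ)}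

open scoped Classical

/-- The set of `Y`-vertices that flip with part `i`. -/
noncomputable def Sflip (G : SimpleGraph V) (f : V → Option (Fin ℓ)) (i : Fin ℓ) : Finset V :=
  (Yset f).filter (fun y => 2 * nbrsIn G y (Xset f i) = (Xset f i).card)

lemma IsBiRegularBipartition.symm (h : IsBiRegularBipartition G U W du dw) :
    IsBiRegularBipartition G W U dw du :=
  ⟨by rw [Finset.union_comm]; exact h.1, by rw [Finset.inter_comm]; exact h.2.1,
   fun u v huv => (h.2.2.1 u v huv).symm, h.2.2.2.2, h.2.2.2.1⟩

lemma mem_UW (h : IsBiRegularBipartition G U W du dw) (v : V) : v ∈ U ∨ v ∈ W := by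
  have : v ∈ U ∪ W := h.1 ▸ Finset.mem_univ v
  exact Finset.mem_union.1 this

lemma not_both (h : IsBiRegularBipartition G U W du dw) {v : V} (hU : v ∈ U) (hW : v ∈ W) :
    False := by
  have : v ∈ U ∩ W := Finset.mem_inter.2 ⟨hU, hW⟩
  rw [h.2.1] at this
  exact absurd this (Finset.notMem_empty v)

lemma adj_W (h : IsBiRegularBipartition G U W du dw) {u v : V} (hu : u ∈ U)
    (huv : G.Adj u v) : v ∈ W := by
  rcases h.2.2.1 u v huv with ⟨_, h2⟩ | ⟨h1, _⟩
  · exact h2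
  · exact absurd h1 (fun h1 => not_both h hu h1)

/-- a vertex of `U` has no neighbors in a subset of `U` -/
lemma nbrsIn_inter_self (h : IsBiRegularBipartition G U W du dw) {u : V} (hu : u ∈ U)
    (S : Finset V) : nbrsIn G u (U ∩ S) = 0 := by
  apply nbrsIn_eq_zero_of_forall
  intro w hw hadj
  exact not_both h (Finset.mem_inter.1 hw).1 (adj_W h hu hadj)

/-- for `u ∈ U`, neighbors in `S` are neighbors in `W ∩ S` -/
lemma nbrsIn_eq_inter (h : IsBiRegularBipartition G U W du dw) {u : V} (hu : u ∈ U)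
    (S : Finset V) : nbrsIn G u S = nbrsIn G u (W ∩ S) := by
  apply nbrsIn_congr_subset G u (Finset.inter_subset_right)
  intro w hw hadj
  exact Finset.mem_inter.2 ⟨adj_W h hu hadj, hw⟩

lemma cards_split (h : IsBiRegularBipartition G U W du dw) (S : Finset V) :
    (U ∩ S).card + (W ∩ S).card = S.card := by
  rw [← Finset.card_union_of_disjoint]
  · congr 1
    rw [← Finset.union_inter_distrib_right, h.1, Finset.univ_inter]
  · refine Finset.disjoint_left.2 (fun v hv hv' => ?_)
    exact not_both h (Finset.mem_inter.1 hv).1 (Finset.mem_inter.1 hv').1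

lemma mem_Xset {v : V} {i : Fin ℓ} : v ∈ Xset f i ↔ f v = some i := by
  simp [Xset]

lemma mem_Yset {v : V} : v ∈ Yset f ↔ f v = none := by
  simp [Yset]

lemma Xset_disj {i j : Fin ℓ} (hij : i ≠ j) : Disjoint (Xset f i) (Xset f j) := by
  refine Finset.disjoint_left.2 (fun v hv hv' => ?_)
  rw [mem_Xset] at hv hv'
  exact hij (by injection hv ▸ hv')

lemma sumX_const (hf : IsGMPartition G f) {i : Fin ℓ} {x x' : V} (hx : x ∈ Xset f i)
    (hx' : x' ∈ Xset f i) :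
    ∑ j, nbrsIn G x (Xset f j) = ∑ j, nbrsIn G x' (Xset f j) :=
  Finset.sum_congr rfl (fun j _ => hf.2 i j x hx x' hx')

lemma deg_split (v : V) :
    nbrsIn G v Finset.univ = nbrsIn G v (Yset f) + ∑ j, nbrsIn G v (Xset f j) := by
  have := nbrsIn_sum_fiber G f v Finset.univ
  simpa using this

lemma edge_count (h : IsBiRegularBipartition G U W du dw) (hf : IsGMPartition G f)
    {i j : Fin ℓ} {x0 z0 : V} (hx0 : x0 ∈ Xset f i) (hz0 : z0 ∈ Xset f j) :
    (U ∩ Xset f i).card * nbrsIn G x0 (Xset f j) =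
      (W ∩ Xset f j).card * nbrsIn G z0 (Xset f i) := by
  have h1 : ∑ x ∈ U ∩ Xset f i, nbrsIn G x (Xset f j) =
      (U ∩ Xset f i).card * nbrsIn G x0 (Xset f j) := by
    rw [Finset.sum_congr rfl (fun x hx => hf.2 i j x (Finset.mem_inter.1 hx).2 x0 hx0)]
    rw [Finset.sum_const, smul_eq_mul]
  have h2 : ∑ z ∈ Xset f j, nbrsIn G z (U ∩ Xset f i) =
      (W ∩ Xset f j).card * nbrsIn G z0 (Xset f i) := by
    rw [← Finset.sum_subset (Finset.inter_subset_right : W ∩ Xset f j ⊆ Xset f j)]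
    · rw [Finset.sum_congr rfl (fun z hz => ?_), Finset.sum_const, smul_eq_mul]
      have hzW : z ∈ W := (Finset.mem_inter.1 hz).1
      have hzX : z ∈ Xset f j := (Finset.mem_inter.1 hz).2
      rw [← nbrsIn_eq_inter h.symm hzW (Xset f i)]
      exact hf.2 j i z hzX z0 hz0
    · intro z hz hznot
      have hzU : z ∈ U := by
        rcases mem_UW h z with h' | h'
        · exact h'
        · exact absurd (Finset.mem_inter.2 ⟨h', hz⟩) hznot
      exact nbrsIn_inter_self h hzU _
  rw [← h1, ← h2]
  exact nbrsIn_double_count G (U ∩ Xset f i) (Xset f j)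

lemma gmFlip_char_Y {y v : V} (hy : f y = none) :
    gmFlip G f y v ↔ ∃ i, f v = some i ∧ 2 * nbrsIn G y (Xset f i) = (Xset f i).card := by
  constructor
  · rintro (⟨i, _, h2, h3⟩ | ⟨i, _, h2, _⟩)
    · exact ⟨i, h2, h3⟩
    · rw [hy] at h2; exact absurd h2 (by simp)
  · rintro ⟨i, h1, h2⟩
    exact Or.inl ⟨i, hy, h1, h2⟩

lemma gmFlip_char_X {x v : V} {i : Fin ℓ} (hx : f x = some i) :
    gmFlip G f x v ↔ f v = none ∧ 2 * nbrsIn G v (Xset f i) = (Xset f i).card := by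
  constructor
  · rintro (⟨j, h1, _, _⟩ | ⟨j, h1, h2, h3⟩)
    · rw [hx] at h1; exact absurd h1 (by simp)
    · rw [hx] at h2
      have : j = i := by injection h2 with h; exact h.symm
      subst this
      exact ⟨h1, h3⟩
  · rintro ⟨h1, h2⟩
    exact Or.inr ⟨i, h1, hx, h2⟩

lemma gmSwitch_adj {u v : V} : (gmSwitch G f).Adj u v ↔
    (gmFlip G f u v ∧ ¬ G.Adj u v ∧ u ≠ v) ∨ (¬ gmFlip G f u v ∧ G.Adj u v) := Iff.rfl

lemma nbrs_switch (x : V) (F : Finset V) (hchar : ∀ v, gmFlip G f x v ↔ v ∈ F)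
    (hxF : x ∉ F) :
    nbrsIn (gmSwitch G f) x Finset.univ + 2 * nbrsIn G x F
      = nbrsIn G x Finset.univ + F.card := by
  classical
  set N := Finset.univ.filter (fun w => G.Adj x w) with hN
  have hN' : Finset.univ.filter (fun w => (gmSwitch G f).Adj x w) = (N \ F) ∪ (F \ N) := by
    ext v
    simp only [Finset.mem_filter, Finset.mem_univ, true_and, Finset.mem_union,
      Finset.mem_sdiff, hN]
    rw [gmSwitch_adj, hchar]
    constructor
    · rintro (⟨h1, h2, _⟩ | ⟨h1, h2⟩)
      · exact Or.inr ⟨h1, by simpa using h2⟩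
      · exact Or.inl ⟨by simpa using h2, h1⟩
    · rintro (⟨h1, h2⟩ | ⟨h1, h2⟩)
      · exact Or.inr ⟨by simpa using h2, by simpa using h1⟩
      · refine Or.inl ⟨h1, by simpa using h2, fun hxv => hxF (hxv ▸ h1)⟩
  have hdisj : Disjoint (N \ F) (F \ N) := disjoint_sdiff_sdiff
  have hcard1 : nbrsIn (gmSwitch G f) x Finset.univ = (N \ F).card + (F \ N).card := by
    unfold nbrsIn
    rw [hN', Finset.card_union_of_disjoint hdisj]
  have hcard2 : nbrsIn G x Finset.univ = N.card := rfl
  have hcard3 : nbrsIn G x F = (F ∩ N).card := by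
    unfold nbrsIn
    congr 1
    ext v
    simp [hN, and_comm]
  have e1 : (N ∩ F).card + (N \ F).card = N.card := Finset.card_inter_add_card_sdiff N F
  have e2 : (F ∩ N).card + (F \ N).card = F.card := Finset.card_inter_add_card_sdiff F N
  have e3 : (N ∩ F).card = (F ∩ N).card := by rw [Finset.inter_comm]
  omega

lemma deg_switch_Y {y : V} (hy : f y = none) :
    nbrsIn (gmSwitch G f) y Finset.univ = nbrsIn G y Finset.univ := by
  classical
  set I := Finset.univ.filter
    (fun i : Fin ℓ => 2 * nbrsIn G y (Xset f i) = (Xset f i).card) with hI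
  set F := I.biUnion (fun i => Xset f i) with hF
  have hmemF : ∀ v, v ∈ F ↔ ∃ i, f v = some i ∧
      2 * nbrsIn G y (Xset f i) = (Xset f i).card := by
    intro v
    simp only [hF, Finset.mem_biUnion, hI, Finset.mem_filter, Finset.mem_univ, true_and,
      mem_Xset]
    tauto
  have hchar : ∀ v, gmFlip G f y v ↔ v ∈ F := by
    intro v; rw [gmFlip_char_Y hy, hmemF]
  have hyF : y ∉ F := by
    rw [hmemF]
    rintro ⟨i, h1, _⟩
    rw [hy] at h1; exact absurd h1 (by simp)
  have hdisjI : ∀ i ∈ I, ∀ j ∈ I, i ≠ j → Disjoint (Xset f i) (Xset f j) :=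
    fun i _ j _ hij => Xset_disj hij
  have hcardF : F.card = ∑ i ∈ I, (Xset f i).card := Finset.card_biUnion hdisjI
  have hnbF : nbrsIn G y F = ∑ i ∈ I, nbrsIn G y (Xset f i) := by
    unfold nbrsIn
    rw [hF, Finset.filter_biUnion]
    exact Finset.card_biUnion (fun i hi j hj hij =>
      (Xset_disj hij).mono (Finset.filter_subset _ _) (Finset.filter_subset _ _))
  have hkey : 2 * nbrsIn G y F = F.card := by
    rw [hnbF, hcardF, Finset.mul_sum]
    exact Finset.sum_congr rfl (fun i hi => by
      simp only [hI, Finset.mem_filter] at hi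
      exact hi.2)
  have := nbrs_switch y F hchar hyF
  omega

lemma adj_of_nbrsIn_eq_card {y : V} {S : Finset V} (h : nbrsIn G y S = S.card) {x : V}
    (hx : x ∈ S) : G.Adj y x := by
  unfold nbrsIn at h
  have hsub := Finset.eq_of_subset_of_card_le (Finset.filter_subset (fun w => G.Adj y w) S)
    (le_of_eq h.symm)
  rw [← hsub] at hx
  exact (Finset.mem_filter.1 hx).2

lemma nbrsIn_le_inter (h : IsBiRegularBipartition G U W du dw) {y : V} (hy : y ∈ W)
    (S : Finset V) : nbrsIn G y S ≤ (U ∩ S).card := by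
  rw [nbrsIn_eq_inter h.symm hy S]
  exact nbrsIn_le_card G y _

/-- If `u ∈ U ∩ X i` and `W ∩ X i` is nonempty, all `Y`-neighbors of `u` lie in `Sflip i ∩ W`. -/
lemma nbrsY_eq_Sflip (h : IsBiRegularBipartition G U W du dw) (hf : IsGMPartition G f)
    {i : Fin ℓ} {u : V} (hu : u ∈ U) (huX : u ∈ Xset f i) (hb : (W ∩ Xset f i).Nonempty) :
    nbrsIn G u (Yset f) = nbrsIn G u (Sflip G f i ∩ W) := by
  apply nbrsIn_congr_subset G u
  · intro v hv
    exact (Finset.mem_filter.1 (Finset.mem_inter.1 hv).1).1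
  · intro y hyY hadj
    have hyW : y ∈ W := adj_W h hu hadj
    have hpos : 0 < nbrsIn G y (Xset f i) :=
      (nbrsIn_pos_iff G y _).2 ⟨u, huX, hadj.symm⟩
    rcases hf.1 y hyY i with h0 | h2 | hfull
    · omega
    · exact Finset.mem_inter.2 ⟨Finset.mem_filter.2 ⟨hyY, h2⟩, hyW⟩
    · obtain ⟨w0, hw0⟩ := hb
      have := adj_of_nbrsIn_eq_card hfull (Finset.mem_inter.1 hw0).2
      exact absurd (adj_W h.symm hyW this) (fun hc => not_both h hc (Finset.mem_inter.1 hw0).1)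

lemma no_unbalanced (h : IsBiRegularBipartition G U W du dw) (hf : IsGMPartition G f)
    {i : Fin ℓ} (hSW : ((Sflip G f i) ∩ W).Nonempty) (hb : (W ∩ Xset f i).Nonempty)
    (hunbal : (Xset f i).card < 2 * (U ∩ Xset f i).card) : False := by
  classical
  have habm : (U ∩ Xset f i).card + (W ∩ Xset f i).card = (Xset f i).card :=
    cards_split h (Xset f i)
  have ham : (U ∩ Xset f i).card ≤ (Xset f i).card :=
    Finset.card_le_card Finset.inter_subset_right
  have ha1 : 1 ≤ (U ∩ Xset f i).card := by omega
  have hm1 : 1 ≤ (Xset f i).card := by omega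
  have hba : (W ∩ Xset f i).card < (U ∩ Xset f i).card := by omega
  obtain ⟨w0, hw0⟩ := hb
  have hw0W : w0 ∈ W := (Finset.mem_inter.1 hw0).1
  have hw0X : w0 ∈ Xset f i := (Finset.mem_inter.1 hw0).2
  -- Step 1: Y-vertices in U have no neighbors in X i
  have hYU0 : ∀ y ∈ Yset f, y ∈ U → nbrsIn G y (Xset f i) = 0 := by
    intro y hyY hyU
    have hle : nbrsIn G y (Xset f i) ≤ (W ∩ Xset f i).card := nbrsIn_le_inter h.symm hyU _
    rcases hf.1 y hyY i with h0 | h2 | hfull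
    · exact h0
    · omega
    · omega
  -- Step 2: w0 has no Y-neighbors
  have hw0Y : nbrsIn G w0 (Yset f) = 0 := by
    apply nbrsIn_eq_zero_of_forall
    intro y hyY hadj
    have hyU : y ∈ U := adj_W h.symm hw0W hadj
    have : 0 < nbrsIn G y (Xset f i) := (nbrsIn_pos_iff G y _).2 ⟨w0, hw0X, hadj.symm⟩
    rw [hYU0 y hyY hyU] at this
    omega
  have hw0deg : dw = ∑ j, nbrsIn G w0 (Xset f j) := by
    have := h.2.2.2.2 w0 hw0W
    rw [deg_split (f := f) w0, hw0Y] at this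
    omega
  -- Step 3: all u in U ∩ X have the same count into Sflip ∩ W, and du = that + dw
  have hstar : ∀ u ∈ U ∩ Xset f i, du = nbrsIn G u (Sflip G f i ∩ W) + dw := by
    intro u hu
    have huU : u ∈ U := (Finset.mem_inter.1 hu).1
    have huX : u ∈ Xset f i := (Finset.mem_inter.1 hu).2
    have hdeg := h.2.2.2.1 u huU
    rw [deg_split (f := f) u] at hdeg
    rw [nbrsY_eq_Sflip h hf huU huX ⟨w0, Finset.mem_inter.2 ⟨hw0W, hw0X⟩⟩] at hdeg
    rw [sumX_const hf huX hw0X, ← hw0deg] at hdeg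
    omega
  obtain ⟨u0, hu0⟩ : (U ∩ Xset f i).Nonempty := Finset.card_pos.1 (by omega)
  have hconst : ∀ u ∈ U ∩ Xset f i,
      nbrsIn G u (Sflip G f i ∩ W) = nbrsIn G u0 (Sflip G f i ∩ W) := by
    intro u hu
    have h1 := hstar u hu
    have h2 := hstar u0 hu0
    omega
  -- Step 4: double counting
  have hdc := nbrsIn_double_count G (Sflip G f i ∩ W) (Xset f i)
  have hLHS : 2 * ∑ y ∈ Sflip G f i ∩ W, nbrsIn G y (Xset f i)
      = (Sflip G f i ∩ W).card * (Xset f i).card := by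
    have hcg : ∑ y ∈ Sflip G f i ∩ W, 2 * nbrsIn G y (Xset f i)
        = ∑ _y ∈ Sflip G f i ∩ W, (Xset f i).card :=
      Finset.sum_congr rfl (fun y hy => (Finset.mem_filter.1 (Finset.mem_inter.1 hy).1).2)
    rw [Finset.mul_sum, hcg, Finset.sum_const, smul_eq_mul]
  have hRHS : ∑ x ∈ Xset f i, nbrsIn G x (Sflip G f i ∩ W)
      = (U ∩ Xset f i).card * nbrsIn G u0 (Sflip G f i ∩ W) := by
    rw [← Finset.sum_subset (Finset.inter_subset_right : U ∩ Xset f i ⊆ Xset f i)]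
    · rw [Finset.sum_congr rfl hconst, Finset.sum_const, smul_eq_mul]
    · intro x hxX hxnot
      have hxW : x ∈ W := by
        rcases mem_UW h x with h' | h'
        · exact absurd (Finset.mem_inter.2 ⟨h', hxX⟩) hxnot
        · exact h'
      apply nbrsIn_eq_zero_of_forall
      intro y hy hadj
      exact not_both h (adj_W h.symm hxW hadj) (Finset.mem_inter.1 hy).2
  have hSWcard : 1 ≤ (Sflip G f i ∩ W).card := Finset.card_pos.2 hSW
  have hak : 2 * ((U ∩ Xset f i).card * nbrsIn G u0 (Sflip G f i ∩ W))
      = (Sflip G f i ∩ W).card * (Xset f i).card := by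
    rw [← hRHS, ← hdc, hLHS]
  have hk1 : 1 ≤ nbrsIn G u0 (Sflip G f i ∩ W) := by
    rcases Nat.eq_zero_or_pos (nbrsIn G u0 (Sflip G f i ∩ W)) with h0 | h1
    · rw [h0, mul_zero] at hak
      have : 1 * 1 ≤ (Sflip G f i ∩ W).card * (Xset f i).card := Nat.mul_le_mul hSWcard hm1
      omega
    · exact h1
  -- Step 5: du > dw
  have hdudw : du = nbrsIn G u0 (Sflip G f i ∩ W) + dw := hstar u0 hu0
  -- Step 6: dw ≥ 1
  have hdw1 : 1 ≤ dw := by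
    obtain ⟨y, hyS, hadj⟩ := (nbrsIn_pos_iff G u0 _).1
      (by omega : 0 < nbrsIn G u0 (Sflip G f i ∩ W))
    have hyW : y ∈ W := (Finset.mem_inter.1 hyS).2
    have := h.2.2.2.2 y hyW
    have hpos : 0 < nbrsIn G y Finset.univ :=
      (nbrsIn_pos_iff G y _).2 ⟨u0, Finset.mem_univ u0, hadj.symm⟩
    omega
  -- Step 7: find a part j with an edge from w0
  have hex : ∃ j, 0 < nbrsIn G w0 (Xset f j) := by
    by_contra hcon
    push_neg at hcon
    simp only [Nat.le_zero] at hcon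
    rw [Finset.sum_congr rfl (fun j _ => hcon j), Finset.sum_const, smul_eq_mul, mul_zero]
      at hw0deg
    omega
  obtain ⟨j, hj⟩ := hex
  obtain ⟨x0, hx0X, hadj0⟩ := (nbrsIn_pos_iff G w0 _).1 hj
  have hx0U : x0 ∈ U := adj_W h.symm hw0W hadj0
  -- Step 8: part j is mixed the other way
  have hc' : 0 < nbrsIn G x0 (Xset f i) := (nbrsIn_pos_iff G x0 _).2 ⟨w0, hw0X, hadj0.symm⟩
  have hE1 := edge_count h hf hw0X hx0X
  have hE2 := edge_count h.symm hf hw0X hx0X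
  have ha'b' : (U ∩ Xset f j).card < (W ∩ Xset f j).card := by
    by_contra hcon
    push_neg at hcon
    have h1 : (W ∩ Xset f j).card * nbrsIn G x0 (Xset f i)
        ≤ (U ∩ Xset f j).card * nbrsIn G x0 (Xset f i) := Nat.mul_le_mul_right _ hcon
    have h2 : (W ∩ Xset f i).card * nbrsIn G w0 (Xset f j)
        < (U ∩ Xset f i).card * nbrsIn G w0 (Xset f j) :=
      Nat.mul_lt_mul_of_lt_of_le hba (le_refl _) hj
    omega
  have habm' : (U ∩ Xset f j).card + (W ∩ Xset f j).card = (Xset f j).card :=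
    cards_split h (Xset f j)
  -- Step 9: Y ∩ W has no neighbors in X j
  have hYW0 : ∀ y ∈ Yset f, y ∈ W → nbrsIn G y (Xset f j) = 0 := by
    intro y hyY hyW
    have hle : nbrsIn G y (Xset f j) ≤ (U ∩ Xset f j).card := nbrsIn_le_inter h hyW _
    rcases hf.1 y hyY j with h0 | h2 | hfull
    · exact h0
    · omega
    · omega
  -- Step 10: du = sum over parts for x0
  have hx0Y : nbrsIn G x0 (Yset f) = 0 := by
    apply nbrsIn_eq_zero_of_forall
    intro y hyY hadj
    have hyW : y ∈ W := adj_W h hx0U hadj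
    have : 0 < nbrsIn G y (Xset f j) := (nbrsIn_pos_iff G y _).2 ⟨x0, hx0X, hadj.symm⟩
    rw [hYW0 y hyY hyW] at this
    omega
  have hx0deg : du = ∑ k, nbrsIn G x0 (Xset f k) := by
    have := h.2.2.2.1 x0 hx0U
    rw [deg_split (f := f) x0, hx0Y] at this
    omega
  -- Step 11: dw ≥ du, contradiction
  obtain ⟨w1, hw1⟩ : (W ∩ Xset f j).Nonempty := Finset.card_pos.1 (by omega)
  have hw1W : w1 ∈ W := (Finset.mem_inter.1 hw1).1
  have hw1X : w1 ∈ Xset f j := (Finset.mem_inter.1 hw1).2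
  have hw1deg := h.2.2.2.2 w1 hw1W
  rw [deg_split (f := f) w1] at hw1deg
  rw [sumX_const hf hw1X hx0X] at hw1deg
  omega

lemma struct (h : IsBiRegularBipartition G U W du dw) (hf : IsGMPartition G f)
    {i : Fin ℓ} (hS : (Sflip G f i).Nonempty) (hm : 0 < (Xset f i).card) :
    (U ∩ Xset f i).card = (Xset f i).card ∨ (W ∩ Xset f i).card = (Xset f i).card ∨
      2 * (U ∩ Xset f i).card = (Xset f i).card := by
  classical
  obtain ⟨y0, hy0⟩ := hS
  have hy0Y : y0 ∈ Yset f := (Finset.mem_filter.1 hy0).1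
  have hy0n : 2 * nbrsIn G y0 (Xset f i) = (Xset f i).card := (Finset.mem_filter.1 hy0).2
  have habm : (U ∩ Xset f i).card + (W ∩ Xset f i).card = (Xset f i).card :=
    cards_split h (Xset f i)
  rcases mem_UW h y0 with hy0U | hy0W
  · -- neighbors of y0 in X i are in W, so m ≤ 2b
    have hle : nbrsIn G y0 (Xset f i) ≤ (W ∩ Xset f i).card := nbrsIn_le_inter h.symm hy0U _
    by_cases hU : (U ∩ Xset f i).Nonempty
    · rcases Nat.lt_or_ge (Xset f i).card (2 * (W ∩ Xset f i).card) with hlt | hge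
      · exact absurd (no_unbalanced h.symm hf
          ⟨y0, Finset.mem_inter.2 ⟨hy0, hy0U⟩⟩ (by rwa [Finset.inter_comm] at hU ⊢) hlt) not_false
      · right; right; omega
    · rw [Finset.not_nonempty_iff_eq_empty] at hU
      right; left
      rw [hU, Finset.card_empty] at habm
      omega
  · have hle : nbrsIn G y0 (Xset f i) ≤ (U ∩ Xset f i).card := nbrsIn_le_inter h hy0W _
    by_cases hW : (W ∩ Xset f i).Nonempty
    · rcases Nat.lt_or_ge (Xset f i).card (2 * (U ∩ Xset f i).card) with hlt | hge
      · exact absurd (no_unbalanced h hf ⟨y0, Finset.mem_inter.2 ⟨hy0, hy0W⟩⟩ hW hlt) not_false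
      · right; right; omega
    · rw [Finset.not_nonempty_iff_eq_empty] at hW
      left
      rw [hW, Finset.card_empty] at habm
      omega

lemma balanced_nbr (h : IsBiRegularBipartition G U W du dw) (hf : IsGMPartition G f)
    {i j : Fin ℓ} {x x' : V} (hbal : 2 * (U ∩ Xset f i).card = (Xset f i).card)
    (hx : x ∈ Xset f i) (hx' : x' ∈ Xset f j) (hadj : G.Adj x x') :
    2 * (U ∩ Xset f j).card = (Xset f j).card := by
  have habmi : (U ∩ Xset f i).card + (W ∩ Xset f i).card = (Xset f i).card :=
    cards_split h (Xset f i)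
  have habmj : (U ∩ Xset f j).card + (W ∩ Xset f j).card = (Xset f j).card :=
    cards_split h (Xset f j)
  have hc' : 0 < nbrsIn G x' (Xset f i) := (nbrsIn_pos_iff G x' _).2 ⟨x, hx, hadj.symm⟩
  have hE1 := edge_count h hf hx hx'
  have hE2 := edge_count h.symm hf hx hx'
  have hab : (U ∩ Xset f i).card = (W ∩ Xset f i).card := by omega
  rw [hab] at hE1
  have : (W ∩ Xset f j).card = (U ∩ Xset f j).card :=
    Nat.eq_of_mul_eq_mul_right hc' (by omega)
  omega

lemma S_eq (h : IsBiRegularBipartition G U W du dw) (hf : IsGMPartition G f)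
    {i : Fin ℓ} (hbne : (W ∩ Xset f i).Nonempty) {u0 : V} (hu0U : u0 ∈ U)
    (hu0X : u0 ∈ Xset f i) :
    du = nbrsIn G u0 (Sflip G f i ∩ W) + ∑ j, nbrsIn G u0 (Xset f j) := by
  have hdeg := h.2.2.2.1 u0 hu0U
  rw [deg_split (f := f) u0] at hdeg
  rw [nbrsY_eq_Sflip h hf hu0U hu0X hbne] at hdeg
  omega

lemma S_count (h : IsBiRegularBipartition G U W du dw) (hf : IsGMPartition G f)
    {i : Fin ℓ} (hbne : (W ∩ Xset f i).Nonempty) {u0 : V} (hu0U : u0 ∈ U)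
    (hu0X : u0 ∈ Xset f i) :
    2 * ((U ∩ Xset f i).card * nbrsIn G u0 (Sflip G f i ∩ W))
      = (Sflip G f i ∩ W).card * (Xset f i).card := by
  classical
  have hconst : ∀ u ∈ U ∩ Xset f i,
      nbrsIn G u (Sflip G f i ∩ W) = nbrsIn G u0 (Sflip G f i ∩ W) := by
    intro u hu
    have h1 := S_eq h hf hbne (Finset.mem_inter.1 hu).1 (Finset.mem_inter.1 hu).2
    have h2 := S_eq h hf hbne hu0U hu0X
    rw [sumX_const hf (Finset.mem_inter.1 hu).2 hu0X] at h1
    omega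
  have hdc := nbrsIn_double_count G (Sflip G f i ∩ W) (Xset f i)
  have hLHS : 2 * ∑ y ∈ Sflip G f i ∩ W, nbrsIn G y (Xset f i)
      = (Sflip G f i ∩ W).card * (Xset f i).card := by
    have hcg : ∑ y ∈ Sflip G f i ∩ W, 2 * nbrsIn G y (Xset f i)
        = ∑ _y ∈ Sflip G f i ∩ W, (Xset f i).card :=
      Finset.sum_congr rfl (fun y hy => (Finset.mem_filter.1 (Finset.mem_inter.1 hy).1).2)
    rw [Finset.mul_sum, hcg, Finset.sum_const, smul_eq_mul]
  have hRHS : ∑ x ∈ Xset f i, nbrsIn G x (Sflip G f i ∩ W)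
      = (U ∩ Xset f i).card * nbrsIn G u0 (Sflip G f i ∩ W) := by
    rw [← Finset.sum_subset (Finset.inter_subset_right : U ∩ Xset f i ⊆ Xset f i)]
    · rw [Finset.sum_congr rfl hconst, Finset.sum_const, smul_eq_mul]
    · intro x hxX hxnot
      have hxW : x ∈ W := by
        rcases mem_UW h x with h' | h'
        · exact absurd (Finset.mem_inter.2 ⟨h', hxX⟩) hxnot
        · exact h'
      apply nbrsIn_eq_zero_of_forall
      intro y hy hadj
      exact not_both h (adj_W h.symm hxW hadj) (Finset.mem_inter.1 hy).2
  rw [← hLHS, hdc, hRHS]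

lemma not_mem_Sflip_X {x : V} {i : Fin ℓ} (hx : f x = some i) : x ∉ Sflip G f i := by
  intro hc
  have := (Finset.mem_filter.1 hc).1
  rw [mem_Yset, hx] at this
  exact absurd this (by simp)

lemma gmFlip_char_Sflip {x : V} {i : Fin ℓ} (hx : f x = some i) (v : V) :
    gmFlip G f x v ↔ v ∈ Sflip G f i := by
  rw [gmFlip_char_X hx]
  simp only [Sflip, Finset.mem_filter, mem_Yset]

lemma deg_switch_X {x : V} {i : Fin ℓ} (hx : f x = some i) :
    nbrsIn (gmSwitch G f) x Finset.univ + 2 * nbrsIn G x (Sflip G f i)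
      = nbrsIn G x Finset.univ + (Sflip G f i).card :=
  nbrs_switch x _ (gmFlip_char_Sflip hx) (not_mem_Sflip_X hx)

/-- Balanced part: vertices of `U ∩ X i` get degree `dw` after switching. -/
lemma balanced_degU (h : IsBiRegularBipartition G U W du dw) (hf : IsGMPartition G f)
    {i : Fin ℓ} (hbal : 2 * (U ∩ Xset f i).card = (Xset f i).card)
    {u : V} (hu : u ∈ U) (hux : u ∈ Xset f i) :
    nbrsIn (gmSwitch G f) u Finset.univ = dw := by
  classical
  have habm : (U ∩ Xset f i).card + (W ∩ Xset f i).card = (Xset f i).card :=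
    cards_split h (Xset f i)
  have hm1 : 1 ≤ (Xset f i).card := Finset.card_pos.2 ⟨u, hux⟩
  have ha1 : 1 ≤ (U ∩ Xset f i).card := by omega
  have hb1 : 1 ≤ (W ∩ Xset f i).card := by omega
  have hbalW : 2 * (W ∩ Xset f i).card = (Xset f i).card := by omega
  have hbne : (W ∩ Xset f i).Nonempty := Finset.card_pos.1 hb1
  have hane : (U ∩ Xset f i).Nonempty := Finset.card_pos.1 ha1
  obtain ⟨w1, hw1⟩ := Finset.card_pos.1 hb1
  have hw1W : w1 ∈ W := (Finset.mem_inter.1 hw1).1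
  have hw1X : w1 ∈ Xset f i := (Finset.mem_inter.1 hw1).2
  -- kU = |Sflip ∩ W|
  have hcount := S_count h hf hbne hu hux
  have hkU : nbrsIn G u (Sflip G f i ∩ W) = (Sflip G f i ∩ W).card := by
    have h1 : (U ∩ Xset f i).card * (2 * nbrsIn G u (Sflip G f i ∩ W))
        = (U ∩ Xset f i).card * (2 * (Sflip G f i ∩ W).card) := by
      rw [← hbal] at hcount
      calc (U ∩ Xset f i).card * (2 * nbrsIn G u (Sflip G f i ∩ W))
          = 2 * ((U ∩ Xset f i).card * nbrsIn G u (Sflip G f i ∩ W)) := by ring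
        _ = (Sflip G f i ∩ W).card * (2 * (U ∩ Xset f i).card) := hcount
        _ = (U ∩ Xset f i).card * (2 * (Sflip G f i ∩ W).card) := by ring
    have := Nat.eq_of_mul_eq_mul_left (by omega : 0 < (U ∩ Xset f i).card) h1
    omega
  -- kW = |Sflip ∩ U|  (symmetric)
  have hcountW := S_count h.symm hf hane hw1W hw1X
  have hkW : nbrsIn G w1 (Sflip G f i ∩ U) = (Sflip G f i ∩ U).card := by
    have hbalW' : 2 * (W ∩ Xset f i).card = (Xset f i).card := hbalW
    have h1 : (W ∩ Xset f i).card * (2 * nbrsIn G w1 (Sflip G f i ∩ U))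
        = (W ∩ Xset f i).card * (2 * (Sflip G f i ∩ U).card) := by
      rw [← hbalW'] at hcountW
      calc (W ∩ Xset f i).card * (2 * nbrsIn G w1 (Sflip G f i ∩ U))
          = 2 * ((W ∩ Xset f i).card * nbrsIn G w1 (Sflip G f i ∩ U)) := by ring
        _ = (Sflip G f i ∩ U).card * (2 * (W ∩ Xset f i).card) := hcountW
        _ = (W ∩ Xset f i).card * (2 * (Sflip G f i ∩ U).card) := by ring
    have := Nat.eq_of_mul_eq_mul_left (by omega : 0 < (W ∩ Xset f i).card) h1
    omega
  -- degree identities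
  have hdu := S_eq h hf hbne hu hux
  have hdw := S_eq h.symm hf hane hw1W hw1X
  rw [sumX_const hf hw1X hux] at hdw
  -- switch degree formula
  have hswitch := deg_switch_X (G := G) (f := f) (mem_Xset.1 hux)
  have hdegu : nbrsIn G u Finset.univ = du := h.2.2.2.1 u hu
  have hSsplit : (U ∩ Sflip G f i).card + (W ∩ Sflip G f i).card = (Sflip G f i).card :=
    cards_split h (Sflip G f i)
  have hic1 : (U ∩ Sflip G f i).card = (Sflip G f i ∩ U).card := by rw [Finset.inter_comm]
  have hic2 : (W ∩ Sflip G f i).card = (Sflip G f i ∩ W).card := by rw [Finset.inter_comm]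
  have hnbu : nbrsIn G u (Sflip G f i) = nbrsIn G u (Sflip G f i ∩ W) := by
    rw [nbrsIn_eq_inter h hu (Sflip G f i), Finset.inter_comm]
  omega

/-- Pure part (contained in `U`): degrees are preserved. -/
lemma pure_degU (h : IsBiRegularBipartition G U W du dw) (hf : IsGMPartition G f)
    {i : Fin ℓ} (hsub : Xset f i ⊆ U) {x : V} (hxX : x ∈ Xset f i) :
    nbrsIn (gmSwitch G f) x Finset.univ = du := by
  classical
  have hm1 : 1 ≤ (Xset f i).card := Finset.card_pos.2 ⟨x, hxX⟩
  have hZdisj : Disjoint (Sflip G f i)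
      ((Yset f).filter (fun y => nbrsIn G y (Xset f i) = (Xset f i).card)) := by
    refine Finset.disjoint_left.2 (fun y hy hy' => ?_)
    have h1 := (Finset.mem_filter.1 hy).2
    have h2 := (Finset.mem_filter.1 hy').2
    omega
  have hdegsplit : ∀ x' ∈ Xset f i, nbrsIn G x' (Yset f) = nbrsIn G x' (Sflip G f i)
      + ((Yset f).filter (fun y => nbrsIn G y (Xset f i) = (Xset f i).card)).card := by
    intro x' hx'
    have h1 : nbrsIn G x' (Yset f) = nbrsIn G x' (Sflip G f i
        ∪ (Yset f).filter (fun y => nbrsIn G y (Xset f i) = (Xset f i).card)) := by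
      apply nbrsIn_congr_subset G x'
      · exact Finset.union_subset (Finset.filter_subset _ _) (Finset.filter_subset _ _)
      · intro y hyY hadj
        have hpos : 0 < nbrsIn G y (Xset f i) := (nbrsIn_pos_iff G y _).2 ⟨x', hx', hadj.symm⟩
        rcases hf.1 y hyY i with h0 | h2 | hfull
        · omega
        · exact Finset.mem_union_left _ (Finset.mem_filter.2 ⟨hyY, h2⟩)
        · exact Finset.mem_union_right _ (Finset.mem_filter.2 ⟨hyY, hfull⟩)
    have h2 := nbrsIn_union G x' hZdisj
    have h3 : nbrsIn G x'
        ((Yset f).filter (fun y => nbrsIn G y (Xset f i) = (Xset f i).card))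
        = ((Yset f).filter (fun y => nbrsIn G y (Xset f i) = (Xset f i).card)).card := by
      unfold nbrsIn
      congr 1
      apply Finset.filter_true_of_mem
      intro y hy
      exact (adj_of_nbrsIn_eq_card (Finset.mem_filter.1 hy).2 hx').symm
    rw [h1, h2, h3]
  have hconst : ∀ x' ∈ Xset f i, nbrsIn G x' (Sflip G f i) = nbrsIn G x (Sflip G f i) := by
    intro x' hx'
    have e1 := h.2.2.2.1 x' (hsub hx')
    have e2 := h.2.2.2.1 x (hsub hxX)
    rw [deg_split (f := f) x', hdegsplit x' hx', sumX_const hf hx' hxX] at e1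
    rw [deg_split (f := f) x, hdegsplit x hxX] at e2
    omega
  -- double counting
  have hdc := nbrsIn_double_count G (Sflip G f i) (Xset f i)
  have hLHS : 2 * ∑ y ∈ Sflip G f i, nbrsIn G y (Xset f i)
      = (Sflip G f i).card * (Xset f i).card := by
    have hcg : ∑ y ∈ Sflip G f i, 2 * nbrsIn G y (Xset f i)
        = ∑ _y ∈ Sflip G f i, (Xset f i).card :=
      Finset.sum_congr rfl (fun y hy => (Finset.mem_filter.1 hy).2)
    rw [Finset.mul_sum, hcg, Finset.sum_const, smul_eq_mul]
  have hRHS : ∑ x' ∈ Xset f i, nbrsIn G x' (Sflip G f i)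
      = (Xset f i).card * nbrsIn G x (Sflip G f i) := by
    rw [Finset.sum_congr rfl hconst, Finset.sum_const, smul_eq_mul]
  have hcancel : 2 * nbrsIn G x (Sflip G f i) = (Sflip G f i).card := by
    have h1 : (Xset f i).card * (2 * nbrsIn G x (Sflip G f i))
        = (Xset f i).card * (Sflip G f i).card := by
      calc (Xset f i).card * (2 * nbrsIn G x (Sflip G f i))
          = 2 * ((Xset f i).card * nbrsIn G x (Sflip G f i)) := by ring
        _ = 2 * ∑ x' ∈ Xset f i, nbrsIn G x' (Sflip G f i) := by rw [hRHS]
        _ = 2 * ∑ y ∈ Sflip G f i, nbrsIn G y (Xset f i) := by rw [hdc]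
        _ = (Sflip G f i).card * (Xset f i).card := hLHS
        _ = (Xset f i).card * (Sflip G f i).card := by ring
    exact Nat.eq_of_mul_eq_mul_left (by omega) h1
  have hswitch := deg_switch_X (G := G) (f := f) (mem_Xset.1 hxX)
  have hdeg : nbrsIn G x Finset.univ = du := h.2.2.2.1 x (hsub hxX)
  omega

/-- The set of vertices lying in balanced parts (which get swapped). -/
noncomputable def gmSwap (G : SimpleGraph V) (f : V → Option (Fin ℓ)) (U : Finset V) :
    Finset V :=
  Finset.univ.filter (fun v => ∃ i, f v = some i ∧
    2 * (U ∩ Xset f i).card = (Xset f i).card)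

lemma mem_gmSwap {v : V} : v ∈ gmSwap G f U ↔ ∃ i, f v = some i ∧
    2 * (U ∩ Xset f i).card = (Xset f i).card := by
  simp [gmSwap]

lemma mem_gmSwap_iff {v : V} {i : Fin ℓ} (hv : f v = some i) :
    v ∈ gmSwap G f U ↔ 2 * (U ∩ Xset f i).card = (Xset f i).card := by
  rw [mem_gmSwap]
  constructor
  · rintro ⟨j, hj, hbal⟩
    rw [hv] at hj
    have : j = i := by injection hj with h'; exact h'.symm
    exact this ▸ hbal
  · exact fun hbal => ⟨i, hv, hbal⟩

lemma not_mem_gmSwap_Y {v : V} (hv : f v = none) : v ∉ gmSwap G f U := by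
  rw [mem_gmSwap]
  rintro ⟨i, hi, _⟩
  rw [hv] at hi
  exact absurd hi (by simp)

lemma gmSwap_comm (h : IsBiRegularBipartition G U W du dw) :
    gmSwap G f W = gmSwap G f U := by
  ext v
  rw [mem_gmSwap, mem_gmSwap]
  constructor <;> rintro ⟨i, hv, hbal⟩ <;> refine ⟨i, hv, ?_⟩ <;>
  · have habm : (U ∩ Xset f i).card + (W ∩ Xset f i).card = (Xset f i).card :=
      cards_split h (Xset f i)
    omega

lemma gmSwap_card (h : IsBiRegularBipartition G U W du dw) :
    (U ∩ gmSwap G f U).card = (W ∩ gmSwap G f U).card := by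
  classical
  have hrepr : ∀ T : Finset V, T ∩ gmSwap G f U =
      (Finset.univ.filter (fun i : Fin ℓ =>
        2 * (U ∩ Xset f i).card = (Xset f i).card)).biUnion
        (fun i => T ∩ Xset f i) := by
    intro T
    ext v
    simp only [Finset.mem_inter, mem_gmSwap, Finset.mem_biUnion, Finset.mem_filter,
      Finset.mem_univ, true_and, mem_Xset]
    tauto
  have hdisj : ∀ i ∈ Finset.univ.filter (fun i : Fin ℓ =>
      2 * (U ∩ Xset f i).card = (Xset f i).card), ∀ j ∈ Finset.univ.filter (fun i : Fin ℓ =>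
      2 * (U ∩ Xset f i).card = (Xset f i).card), i ≠ j →
      ∀ (T : Finset V), Disjoint (T ∩ Xset f i) (T ∩ Xset f j) := by
    intro i _ j _ hij T
    exact (Xset_disj hij).mono Finset.inter_subset_right Finset.inter_subset_right
  rw [hrepr U, hrepr W, Finset.card_biUnion (fun i hi j hj hij => hdisj i hi j hj hij U),
    Finset.card_biUnion (fun i hi j hj hij => hdisj i hi j hj hij W)]
  apply Finset.sum_congr rfl
  intro i hi
  have hbal := (Finset.mem_filter.1 hi).2
  have habm : (U ∩ Xset f i).card + (W ∩ Xset f i).card = (Xset f i).card :=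
    cards_split h (Xset f i)
  omega

/-- Degrees on the switched side `U' = (U \ Swap) ∪ (W ∩ Swap)` are all `du`. -/
lemma deg_side (h : IsBiRegularBipartition G U W du dw) (hf : IsGMPartition G f) :
    ∀ u ∈ (U \ gmSwap G f U) ∪ (W ∩ gmSwap G f U),
      nbrsIn (gmSwitch G f) u Finset.univ = du := by
  classical
  intro u hu
  rcases Finset.mem_union.1 hu with hu1 | hu2
  · have huU : u ∈ U := (Finset.mem_sdiff.1 hu1).1
    have huS : u ∉ gmSwap G f U := (Finset.mem_sdiff.1 hu1).2
    cases hfu : f u with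
    | none => rw [deg_switch_Y hfu]; exact h.2.2.2.1 u huU
    | some i =>
      have hnotbal : ¬ (2 * (U ∩ Xset f i).card = (Xset f i).card) :=
        fun hbal => huS ((mem_gmSwap_iff hfu).2 hbal)
      have huX : u ∈ Xset f i := mem_Xset.2 hfu
      by_cases hS : (Sflip G f i).Nonempty
      · rcases struct h hf hS (Finset.card_pos.2 ⟨u, huX⟩) with hpU | hpW | hbal
        · have hUX : U ∩ Xset f i = Xset f i :=
            Finset.eq_of_subset_of_card_le Finset.inter_subset_right (le_of_eq hpU.symm)
          have hsub : Xset f i ⊆ U := fun z hz =>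
            (Finset.mem_inter.1 (hUX.symm ▸ hz : z ∈ U ∩ Xset f i)).1
          exact pure_degU h hf hsub huX
        · have hWX : W ∩ Xset f i = Xset f i :=
            Finset.eq_of_subset_of_card_le Finset.inter_subset_right (le_of_eq hpW.symm)
          have huW : u ∈ W := (Finset.mem_inter.1 (hWX.symm ▸ huX : u ∈ W ∩ Xset f i)).1
          exact absurd huW (fun hc => not_both h huU hc)
        · exact absurd hbal hnotbal
      · rw [Finset.not_nonempty_iff_eq_empty] at hS
        have hswitch := deg_switch_X (G := G) (f := f) hfu
        rw [hS] at hswitch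
        simp only [Finset.card_empty] at hswitch
        have : nbrsIn G u (∅ : Finset V) = 0 := by
          unfold nbrsIn; simp
        rw [this] at hswitch
        have hdeg : nbrsIn G u Finset.univ = du := h.2.2.2.1 u huU
        omega
  · have huW : u ∈ W := (Finset.mem_inter.1 hu2).1
    obtain ⟨i, hfu, hbal⟩ := mem_gmSwap.1 (Finset.mem_inter.1 hu2).2
    have huX : u ∈ Xset f i := mem_Xset.2 hfu
    have habm : (U ∩ Xset f i).card + (W ∩ Xset f i).card = (Xset f i).card :=
      cards_split h (Xset f i)
    have hbalW : 2 * (W ∩ Xset f i).card = (Xset f i).card := by omega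
    exact balanced_degU h.symm hf hbalW huW huX

lemma gmFlip_comm {u v : V} : gmFlip G f u v ↔ gmFlip G f v u := ⟨Or.symm, Or.symm⟩

lemma cross_YX (h : IsBiRegularBipartition G U W du dw) (hf : IsGMPartition G f)
    {y x : V} {i : Fin ℓ} (hy : f y = none) (hx : f x = some i)
    (hadj' : (gmSwitch G f).Adj y x) :
    (y ∈ (U \ gmSwap G f U) ∪ (W ∩ gmSwap G f U)
      ∧ x ∈ (W \ gmSwap G f U) ∪ (U ∩ gmSwap G f U)) ∨
    (y ∈ (W \ gmSwap G f U) ∪ (U ∩ gmSwap G f U)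
      ∧ x ∈ (U \ gmSwap G f U) ∪ (W ∩ gmSwap G f U)) := by
  classical
  have hxX : x ∈ Xset f i := mem_Xset.2 hx
  have hyY : y ∈ Yset f := mem_Yset.2 hy
  have hyS : y ∉ gmSwap G f U := not_mem_gmSwap_Y hy
  have hm1 : 1 ≤ (Xset f i).card := Finset.card_pos.2 ⟨x, hxX⟩
  have habm : (U ∩ Xset f i).card + (W ∩ Xset f i).card = (Xset f i).card :=
    cards_split h (Xset f i)
  rcases gmSwitch_adj.1 hadj' with ⟨hflip, hnadj, _⟩ | ⟨hnoflip, hadj⟩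
  · -- flipped pair: y ∈ Sflip i
    have hySf : y ∈ Sflip G f i := (gmFlip_char_Sflip hx y).1 (gmFlip_comm.1 hflip)
    have hyn : 2 * nbrsIn G y (Xset f i) = (Xset f i).card := (Finset.mem_filter.1 hySf).2
    have hSne : (Sflip G f i).Nonempty := ⟨y, hySf⟩
    have hnpos : 0 < nbrsIn G y (Xset f i) := by omega
    obtain ⟨x1, hx1X, hadj1⟩ := (nbrsIn_pos_iff G y _).1 hnpos
    rcases struct h hf hSne (by omega) with hpU | hpW | hbal
    · -- X i pure in U
      have hUX : U ∩ Xset f i = Xset f i :=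
        Finset.eq_of_subset_of_card_le Finset.inter_subset_right (le_of_eq hpU.symm)
      have hxU : x ∈ U := (Finset.mem_inter.1 (hUX.symm ▸ hxX : x ∈ U ∩ Xset f i)).1
      have hx1U : x1 ∈ U := (Finset.mem_inter.1 (hUX.symm ▸ hx1X : x1 ∈ U ∩ Xset f i)).1
      have hyW : y ∈ W := adj_W h hx1U hadj1.symm
      have hnotbal : x ∉ gmSwap G f U := by
        rw [mem_gmSwap_iff hx]
        omega
      exact Or.inr ⟨Finset.mem_union_left _ (Finset.mem_sdiff.2 ⟨hyW, hyS⟩),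
        Finset.mem_union_left _ (Finset.mem_sdiff.2 ⟨hxU, hnotbal⟩)⟩
    · -- X i pure in W
      have hWX : W ∩ Xset f i = Xset f i :=
        Finset.eq_of_subset_of_card_le Finset.inter_subset_right (le_of_eq hpW.symm)
      have hxW : x ∈ W := (Finset.mem_inter.1 (hWX.symm ▸ hxX : x ∈ W ∩ Xset f i)).1
      have hx1W : x1 ∈ W := (Finset.mem_inter.1 (hWX.symm ▸ hx1X : x1 ∈ W ∩ Xset f i)).1
      have hyU : y ∈ U := adj_W h.symm hx1W hadj1.symm
      have haU : (U ∩ Xset f i).card = 0 := by omega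
      have hnotbal : x ∉ gmSwap G f U := by
        rw [mem_gmSwap_iff hx]
        omega
      exact Or.inl ⟨Finset.mem_union_left _ (Finset.mem_sdiff.2 ⟨hyU, hyS⟩),
        Finset.mem_union_left _ (Finset.mem_sdiff.2 ⟨hxW, hnotbal⟩)⟩
    · -- balanced part
      have hxSwap : x ∈ gmSwap G f U := (mem_gmSwap_iff hx).2 hbal
      rcases mem_UW h y with hyU | hyW
      · -- y ∈ U: its neighbors in X i are exactly W ∩ X i, so x ∈ U
        have hfil : (Xset f i).filter (fun w => G.Adj y w) = W ∩ Xset f i := by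
          apply Finset.eq_of_subset_of_card_le
          · intro z hz
            have hz' := Finset.mem_filter.1 hz
            exact Finset.mem_inter.2 ⟨adj_W h hyU hz'.2, hz'.1⟩
          · have hcardfil : ((Xset f i).filter (fun w => G.Adj y w)).card
                = nbrsIn G y (Xset f i) := by
              unfold nbrsIn
              congr 1
            omega
        have hxU : x ∈ U := by
          rcases mem_UW h x with h' | h'
          · exact h'
          · exfalso
            have : x ∈ (Xset f i).filter (fun w => G.Adj y w) := by
              rw [hfil]; exact Finset.mem_inter.2 ⟨h', hxX⟩
            exact hnadj (Finset.mem_filter.1 this).2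
        exact Or.inl ⟨Finset.mem_union_left _ (Finset.mem_sdiff.2 ⟨hyU, hyS⟩),
          Finset.mem_union_right _ (Finset.mem_inter.2 ⟨hxU, hxSwap⟩)⟩
      · -- y ∈ W: symmetric
        have hfil : (Xset f i).filter (fun w => G.Adj y w) = U ∩ Xset f i := by
          apply Finset.eq_of_subset_of_card_le
          · intro z hz
            have hz' := Finset.mem_filter.1 hz
            exact Finset.mem_inter.2 ⟨adj_W h.symm hyW hz'.2, hz'.1⟩
          · have hcardfil : ((Xset f i).filter (fun w => G.Adj y w)).card
                = nbrsIn G y (Xset f i) := by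
              unfold nbrsIn
              congr 1
            omega
        have hxW : x ∈ W := by
          rcases mem_UW h x with h' | h'
          · exfalso
            have : x ∈ (Xset f i).filter (fun w => G.Adj y w) := by
              rw [hfil]; exact Finset.mem_inter.2 ⟨h', hxX⟩
            exact hnadj (Finset.mem_filter.1 this).2
          · exact h'
        exact Or.inr ⟨Finset.mem_union_left _ (Finset.mem_sdiff.2 ⟨hyW, hyS⟩),
          Finset.mem_union_right _ (Finset.mem_inter.2 ⟨hxW, hxSwap⟩)⟩
  · -- unflipped pair: the G-edge survives, and X i cannot be balanced
    have hnpos : 0 < nbrsIn G y (Xset f i) := (nbrsIn_pos_iff G y _).2 ⟨x, hxX, hadj⟩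
    have hnotbal : ¬ (2 * (U ∩ Xset f i).card = (Xset f i).card) := by
      intro hbal
      have ha1 : 1 ≤ (U ∩ Xset f i).card := by omega
      have hb1 : 1 ≤ (W ∩ Xset f i).card := by omega
      rcases hf.1 y hyY i with h0 | h2 | hfull
      · omega
      · exact hnoflip (Or.inl ⟨i, hy, hx, h2⟩)
      · obtain ⟨u1, hu1⟩ := Finset.card_pos.1 ha1
        obtain ⟨w1, hw1⟩ := Finset.card_pos.1 hb1
        have hadju1 := adj_of_nbrsIn_eq_card hfull (Finset.mem_inter.1 hu1).2
        have hadjw1 := adj_of_nbrsIn_eq_card hfull (Finset.mem_inter.1 hw1).2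
        rcases mem_UW h y with hyU | hyW
        · exact not_both h (Finset.mem_inter.1 hu1).1 (adj_W h hyU hadju1)
        · exact not_both h (adj_W h.symm hyW hadjw1) (Finset.mem_inter.1 hw1).1
    have hxS : x ∉ gmSwap G f U := fun hc => hnotbal ((mem_gmSwap_iff hx).1 hc)
    rcases h.2.2.1 y x hadj with ⟨hyU, hxW⟩ | ⟨hyW, hxU⟩
    · exact Or.inl ⟨Finset.mem_union_left _ (Finset.mem_sdiff.2 ⟨hyU, hyS⟩),
        Finset.mem_union_left _ (Finset.mem_sdiff.2 ⟨hxW, hxS⟩)⟩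
    · exact Or.inr ⟨Finset.mem_union_left _ (Finset.mem_sdiff.2 ⟨hyW, hyS⟩),
        Finset.mem_union_left _ (Finset.mem_sdiff.2 ⟨hxU, hxS⟩)⟩

lemma cross (h : IsBiRegularBipartition G U W du dw) (hf : IsGMPartition G f)
    {u v : V} (hadj' : (gmSwitch G f).Adj u v) :
    (u ∈ (U \ gmSwap G f U) ∪ (W ∩ gmSwap G f U)
      ∧ v ∈ (W \ gmSwap G f U) ∪ (U ∩ gmSwap G f U)) ∨
    (u ∈ (W \ gmSwap G f U) ∪ (U ∩ gmSwap G f U)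
      ∧ v ∈ (U \ gmSwap G f U) ∪ (W ∩ gmSwap G f U)) := by
  classical
  cases hu : f u with
  | none =>
    cases hv : f v with
    | none =>
      -- both in Y: no flip possible, edge survives
      have hadj : G.Adj u v := by
        rcases gmSwitch_adj.1 hadj' with ⟨hflip, _, _⟩ | ⟨_, hadj⟩
        · exfalso
          rcases hflip with ⟨i, _, h2, _⟩ | ⟨i, _, h2, _⟩
          · rw [hv] at h2; exact absurd h2 (by simp)
          · rw [hu] at h2; exact absurd h2 (by simp)
        · exact hadj
      have huS : u ∉ gmSwap G f U := not_mem_gmSwap_Y hu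
      have hvS : v ∉ gmSwap G f U := not_mem_gmSwap_Y hv
      rcases h.2.2.1 u v hadj with ⟨h1, h2⟩ | ⟨h1, h2⟩
      · exact Or.inl ⟨Finset.mem_union_left _ (Finset.mem_sdiff.2 ⟨h1, huS⟩),
          Finset.mem_union_left _ (Finset.mem_sdiff.2 ⟨h2, hvS⟩)⟩
      · exact Or.inr ⟨Finset.mem_union_left _ (Finset.mem_sdiff.2 ⟨h1, huS⟩),
          Finset.mem_union_left _ (Finset.mem_sdiff.2 ⟨h2, hvS⟩)⟩
    | some i => exact (cross_YX h hf hu hv hadj')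
  | some i =>
    cases hv : f v with
    | none =>
      rcases cross_YX h hf hv hu ((gmSwitch G f).adj_symm hadj') with ⟨h1, h2⟩ | ⟨h1, h2⟩
      · exact Or.inr ⟨h2, h1⟩
      · exact Or.inl ⟨h2, h1⟩
    | some j =>
      -- both in X: no flip possible, edge survives
      have hadj : G.Adj u v := by
        rcases gmSwitch_adj.1 hadj' with ⟨hflip, _, _⟩ | ⟨_, hadj⟩
        · exfalso
          rcases hflip with ⟨k, h1, _, _⟩ | ⟨k, h1, _, _⟩
          · rw [hu] at h1; exact absurd h1 (by simp)
          · rw [hv] at h1; exact absurd h1 (by simp)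
        · exact hadj
      have huX : u ∈ Xset f i := mem_Xset.2 hu
      have hvX : v ∈ Xset f j := mem_Xset.2 hv
      have hbal_iff : (2 * (U ∩ Xset f i).card = (Xset f i).card)
          ↔ (2 * (U ∩ Xset f j).card = (Xset f j).card) := by
        constructor
        · intro hb; exact balanced_nbr h hf hb huX hvX hadj
        · intro hb; exact balanced_nbr h hf hb hvX huX hadj.symm
      rcases h.2.2.1 u v hadj with ⟨h1, h2⟩ | ⟨h1, h2⟩
      · by_cases hbi : 2 * (U ∩ Xset f i).card = (Xset f i).card
        · exact Or.inr ⟨Finset.mem_union_right _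
            (Finset.mem_inter.2 ⟨h1, (mem_gmSwap_iff hu).2 hbi⟩),
            Finset.mem_union_right _
            (Finset.mem_inter.2 ⟨h2, (mem_gmSwap_iff hv).2 (hbal_iff.1 hbi)⟩)⟩
        · refine Or.inl ⟨Finset.mem_union_left _ (Finset.mem_sdiff.2
            ⟨h1, fun hc => hbi ((mem_gmSwap_iff hu).1 hc)⟩),
            Finset.mem_union_left _ (Finset.mem_sdiff.2
            ⟨h2, fun hc => hbi (hbal_iff.2 ((mem_gmSwap_iff hv).1 hc))⟩)⟩
      · by_cases hbi : 2 * (U ∩ Xset f i).card = (Xset f i).card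
        · exact Or.inl ⟨Finset.mem_union_right _
            (Finset.mem_inter.2 ⟨h1, (mem_gmSwap_iff hu).2 hbi⟩),
            Finset.mem_union_right _
            (Finset.mem_inter.2 ⟨h2, (mem_gmSwap_iff hv).2 (hbal_iff.1 hbi)⟩)⟩
        · refine Or.inr ⟨Finset.mem_union_left _ (Finset.mem_sdiff.2
            ⟨h1, fun hc => hbi ((mem_gmSwap_iff hu).1 hc)⟩),
            Finset.mem_union_left _ (Finset.mem_sdiff.2
            ⟨h2, fun hc => hbi (hbal_iff.2 ((mem_gmSwap_iff hv).1 hc))⟩)⟩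

end Main

/-- If `G` is a `(du, dw)`-regular bipartite graph with bipartition `(U, W)` and `G'` is
obtained from `G` by a Godsil–McKay switching, then `G'` is also a `(du, dw)`-regular
bipartite graph with the same degree sequences: there is a bipartition `(U', W')` of the
vertex set with `|U'| = |U|` and `|W'| = |W|` such that every edge of `G'` joins `U'` to `W'`,
every vertex of `U'` has degree `du` in `G'`, and every vertex of `W'` has degree `dw`. -/


theorem godsilMcKay_preserves_biregular {V : Type*} [Fintype V] [DecidableEq V]
    (G : SimpleGraph V) (U W : Finset V) (du dw : ℕ)
    (hG : IsBiRegularBipartition G U W du dw)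
    {ℓ : ℕ} (f : V → Option (Fin ℓ)) (hf : IsGMPartition G f) :
    ∃ U' W' : Finset V, U'.card = U.card ∧ W'.card = W.card ∧
      IsBiRegularBipartition (gmSwitch G f) U' W' du dw := by
  classical
  refine ⟨(U \ gmSwap G f U) ∪ (W ∩ gmSwap G f U),
          (W \ gmSwap G f U) ∪ (U ∩ gmSwap G f U), ?_, ?_, ?_, ?_, ?_, ?_, ?_⟩
  · -- |U'| = |U|
    have hScard := gmSwap_card (f := f) hG
    have d1 : Disjoint (U \ gmSwap G f U) (W ∩ gmSwap G f U) :=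
      Finset.disjoint_left.2 (fun z hz hz' =>
        not_both hG (Finset.mem_sdiff.1 hz).1 (Finset.mem_inter.1 hz').1)
    rw [Finset.card_union_of_disjoint d1]
    have e1 := Finset.card_inter_add_card_sdiff U (gmSwap G f U)
    omega
  · -- |W'| = |W|
    have hScard := gmSwap_card (f := f) hG
    have d1 : Disjoint (W \ gmSwap G f U) (U ∩ gmSwap G f U) :=
      Finset.disjoint_left.2 (fun z hz hz' =>
        not_both hG (Finset.mem_inter.1 hz').1 (Finset.mem_sdiff.1 hz).1)
    rw [Finset.card_union_of_disjoint d1]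
    have e2 := Finset.card_inter_add_card_sdiff W (gmSwap G f U)
    omega
  · -- union is univ
    apply Finset.eq_univ_of_forall
    intro v
    have := mem_UW hG v
    by_cases hv : v ∈ gmSwap G f U <;>
    · simp only [Finset.mem_union, Finset.mem_sdiff, Finset.mem_inter]
      tauto
  · -- intersection is empty
    rw [Finset.eq_empty_iff_forall_notMem]
    intro v hv
    rw [Finset.mem_inter] at hv
    obtain ⟨h1, h2⟩ := hv
    rcases Finset.mem_union.1 h1 with h1' | h1' <;> rcases Finset.mem_union.1 h2 with h2' | h2'
    · exact not_both hG (Finset.mem_sdiff.1 h1').1 (Finset.mem_sdiff.1 h2').1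
    · exact (Finset.mem_sdiff.1 h1').2 (Finset.mem_inter.1 h2').2
    · exact (Finset.mem_sdiff.1 h2').2 (Finset.mem_inter.1 h1').2
    · exact not_both hG (Finset.mem_inter.1 h2').1 (Finset.mem_inter.1 h1').1
  · -- edges cross
    exact fun u v hadj' => cross hG hf hadj'
  · -- degrees on U'
    exact deg_side hG hf
  · -- degrees on W'
    have hd := deg_side hG.symm hf
    rw [gmSwap_comm hG] at hd
    exact hd
end

section
/- Let G be a finite (d_u, d_w)-regular bipartite graph with bipartition (U, W) and let {X_1, …, X_ℓ, Y} be a Godsil–McKay switching partition of its vertex set. If X_i is of Type 3 and X_j is of Type 1 or of Type 2 (i ≠ j), then there is no edge of G between a vertex of X_i and a vertex of X_j. -/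
open Finset SimpleGraph Polynomial

/-- Property P1: in a `(du, dw)`-regular bipartite graph with a Godsil–McKay switching
partition, there is no edge between a Type-3 set `X_i` (one meeting both `U` and `W`) and a
Type-1 or Type-2 set `X_j` (one contained in `U` or in `W`). -/
theorem gm_no_edge_type3_type12 {V : Type*} [Fintype V] [DecidableEq V]
    (G : SimpleGraph V) (U W : Finset V) (du dw : ℕ)
    (hG : IsBiRegularBipartition G U W du dw)
    {ℓ : ℕ} (f : V → Option (Fin ℓ)) (hf : IsGMPartition G f)
    (i j : Fin ℓ) (hij : i ≠ j)
    (h3 : (Xset f i ∩ U).Nonempty ∧ (Xset f i ∩ W).Nonempty)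
    (h12 : Xset f j ⊆ U ∨ Xset f j ⊆ W) :
    ∀ u ∈ Xset f i, ∀ v ∈ Xset f j, ¬ G.Adj u v := by
  classical
  obtain ⟨-, hUW, hbip, -, -⟩ := hG
  obtain ⟨h3U, h3W⟩ := h3
  have key : ∀ (S : Finset V) (u0 : V), u0 ∈ Xset f i → u0 ∈ S →
      Xset f j ⊆ S → (∀ a b, G.Adj a b → a ∈ S → b ∉ S) →
      ∀ u ∈ Xset f i, ∀ v ∈ Xset f j, ¬ G.Adj u v := by
    intro S u0 hu0i hu0S hjS hSS u hu v hv hadj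
    have h0 : nbrsIn G u0 (Xset f j) = 0 := by
      unfold nbrsIn
      rw [Finset.card_eq_zero, Finset.filter_eq_empty_iff]
      intro w hw hadj'
      exact hSS u0 w hadj' hu0S (hjS hw)
    have hz : nbrsIn G u (Xset f j) = 0 :=
      (hf.2 i j u hu u0 hu0i).trans h0
    have hv' : v ∈ Finset.filter (fun w => G.Adj u w) (Xset f j) :=
      Finset.mem_filter.mpr ⟨hv, hadj⟩
    unfold nbrsIn at hz
    rw [Finset.card_eq_zero] at hz
    rw [hz] at hv'
    exact Finset.notMem_empty v hv'
  have hdisj : ∀ a, a ∈ U → a ∈ W → False := by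
    intro a haU haW
    have : a ∈ U ∩ W := Finset.mem_inter.mpr ⟨haU, haW⟩
    rw [hUW] at this
    exact Finset.notMem_empty a this
  rcases h12 with hjU | hjW
  · obtain ⟨u0, hu0⟩ := h3U
    refine key U u0 (Finset.mem_inter.mp hu0).1 (Finset.mem_inter.mp hu0).2 hjU ?_
    intro a b hadj haU hbU
    rcases hbip a b hadj with ⟨-, hbW⟩ | ⟨haW, -⟩
    · exact hdisj b hbU hbW
    · exact hdisj a haU haW
  · obtain ⟨u0, hu0⟩ := h3W
    refine key W u0 (Finset.mem_inter.mp hu0).1 (Finset.mem_inter.mp hu0).2 hjW ?_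
    intro a b hadj haW hbW
    rcases hbip a b hadj with ⟨haU, -⟩ | ⟨-, hbU⟩
    · exact hdisj a haU haW
    · exact hdisj b hbU hbW
end

section
/- Let G be a finite (d_u, d_w)-regular bipartite graph with bipartition (U, W) and let {X_1, …, X_ℓ, Y} be a Godsil–McKay switching partition of its vertex set. Suppose X_i and X_j (i ≠ j) are both of Type 3.2 and some vertex of X_i has a neighbor in X_j. Then if |X_i^1| > |X_i^2| one has |X_j^1| < |X_j^2|, and if |X_i^1| < |X_i^2| one has |X_j^1| > |X_j^2|. -/
open Finset SimpleGraph Polynomial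

open scoped Classical in
lemma gm_double_count {V : Type*} (A B : Finset V) (r : V → V → Prop) :
    ∑ x ∈ A, (B.filter (r x)).card = ∑ y ∈ B, (A.filter (fun x => r x y)).card := by
  simp_rw [Finset.card_filter]
  exact Finset.sum_comm

open scoped Classical in
lemma gm_count_lemma {V : Type*} [Fintype V] [DecidableEq V] (G : SimpleGraph V) {ℓ : ℕ}
    (f : V → Option (Fin ℓ))
    (hf : ∀ i j : Fin ℓ, ∀ u ∈ Xset f i, ∀ v ∈ Xset f i,
      nbrsIn G u (Xset f j) = nbrsIn G v (Xset f j))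
    (i j : Fin ℓ) (P Q : Finset V)
    (hPQ : ∀ x y, G.Adj x y → (x ∈ P ↔ y ∈ Q))
    (u0 v0 : V) (hu0 : u0 ∈ Xset f i) (hv0 : v0 ∈ Xset f j) :
    (Xset f i ∩ P).card * nbrsIn G u0 (Xset f j)
      = (Xset f j ∩ Q).card * nbrsIn G v0 (Xset f i) := by
  have step1 : (Xset f i ∩ P).card * nbrsIn G u0 (Xset f j)
      = ∑ x ∈ Xset f i ∩ P, ((Xset f j).filter (G.Adj x)).card := by
    have : ∑ x ∈ Xset f i ∩ P, ((Xset f j).filter (G.Adj x)).card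
        = ∑ _x ∈ Xset f i ∩ P, nbrsIn G u0 (Xset f j) := by
      apply Finset.sum_congr rfl
      intro x hx
      have hx' : x ∈ Xset f i := (Finset.mem_inter.1 hx).1
      exact hf i j x hx' u0 hu0
    rw [this, Finset.sum_const, smul_eq_mul]
  rw [step1, gm_double_count]
  have step2 : ∑ y ∈ Xset f j, ((Xset f i ∩ P).filter (fun x => G.Adj x y)).card
      = ∑ y ∈ Xset f j ∩ Q, ((Xset f i ∩ P).filter (fun x => G.Adj x y)).card := by
    refine (Finset.sum_subset (Finset.inter_subset_left) ?_).symm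
    intro y hy hyQ
    have hy' : y ∉ Q := fun h => hyQ (Finset.mem_inter.2 ⟨hy, h⟩)
    rw [Finset.card_eq_zero, Finset.filter_eq_empty_iff]
    intro x hx hadj
    exact hy' ((hPQ x y hadj).1 (Finset.mem_inter.1 hx).2)
  rw [step2]
  have : ∑ y ∈ Xset f j ∩ Q, ((Xset f i ∩ P).filter (fun x => G.Adj x y)).card
      = ∑ _y ∈ Xset f j ∩ Q, nbrsIn G v0 (Xset f i) := by
    apply Finset.sum_congr rfl
    intro y hy
    have hyQ : y ∈ Q := (Finset.mem_inter.1 hy).2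
    have hyj : y ∈ Xset f j := (Finset.mem_inter.1 hy).1
    have : ((Xset f i ∩ P).filter (fun x => G.Adj x y)).card = nbrsIn G y (Xset f i) := by
      unfold nbrsIn
      congr 1
      ext x
      simp only [Finset.mem_filter, Finset.mem_inter]
      constructor
      · rintro ⟨⟨hxi, _⟩, hadj⟩
        exact ⟨hxi, hadj.symm⟩
      · rintro ⟨hxi, hadj⟩
        exact ⟨⟨hxi, (hPQ x y hadj.symm).2 hyQ⟩, hadj.symm⟩
    rw [this]
    exact hf j i y hyj v0 hv0
  rw [this, Finset.sum_const, smul_eq_mul]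

/-- Property P3: in a `(du, dw)`-regular bipartite graph with a Godsil–McKay switching
partition, if `X_i` and `X_j` are both of Type 3.2 and some vertex of `X_i` has a neighbor
in `X_j`, then `|X_i ∩ U| > |X_i ∩ W|` implies `|X_j ∩ U| < |X_j ∩ W|`, and
`|X_i ∩ U| < |X_i ∩ W|` implies `|X_j ∩ U| > |X_j ∩ W|`. -/
theorem gm_type32_adjacent_opposite {V : Type*} [Fintype V] [DecidableEq V]
    (G : SimpleGraph V) (U W : Finset V) (du dw : ℕ)
    (hG : IsBiRegularBipartition G U W du dw)
    {ℓ : ℕ} (f : V → Option (Fin ℓ)) (hf : IsGMPartition G f)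
    (i j : Fin ℓ) (hij : i ≠ j)
    (h32i : (Xset f i ∩ U).Nonempty ∧ (Xset f i ∩ W).Nonempty ∧
      (Xset f i ∩ U).card ≠ (Xset f i ∩ W).card)
    (h32j : (Xset f j ∩ U).Nonempty ∧ (Xset f j ∩ W).Nonempty ∧
      (Xset f j ∩ U).card ≠ (Xset f j ∩ W).card)
    (hadj : ∃ u ∈ Xset f i, ∃ v ∈ Xset f j, G.Adj u v) :
    ((Xset f i ∩ U).card > (Xset f i ∩ W).card →
      (Xset f j ∩ U).card < (Xset f j ∩ W).card) ∧
    ((Xset f i ∩ U).card < (Xset f i ∩ W).card →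
      (Xset f j ∩ U).card > (Xset f j ∩ W).card) := by
  classical
  obtain ⟨hUW, hdisj, hbip, _, _⟩ := hG
  obtain ⟨u0, hu0, v0, hv0, hadj0⟩ := hadj
  have hmem : ∀ z, z ∈ U → z ∉ W := by
    intro z hz hz'
    have : z ∈ U ∩ W := Finset.mem_inter.2 ⟨hz, hz'⟩
    simp [hdisj] at this
  have hPQ1 : ∀ x y, G.Adj x y → (x ∈ U ↔ y ∈ W) := by
    intro x y hxy
    rcases hbip x y hxy with ⟨hx, hy⟩ | ⟨hx, hy⟩
    · exact ⟨fun _ => hy, fun _ => hx⟩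
    · exact ⟨fun hxU => (hmem x hxU hx).elim, fun hyW => (hmem y hy hyW).elim⟩
  have hPQ2 : ∀ x y, G.Adj x y → (x ∈ W ↔ y ∈ U) := by
    intro x y hxy
    rcases hbip x y hxy with ⟨hx, hy⟩ | ⟨hx, hy⟩
    · exact ⟨fun hxW => (hmem x hx hxW).elim, fun hyU => (hmem y hyU hy).elim⟩
    · exact ⟨fun _ => hy, fun _ => hx⟩
  set c := nbrsIn G u0 (Xset f j) with hc_def
  set d := nbrsIn G v0 (Xset f i) with hd_def
  have hc : 0 < c := by
    rw [hc_def]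
    unfold nbrsIn
    rw [Finset.card_pos]
    exact ⟨v0, Finset.mem_filter.2 ⟨hv0, hadj0⟩⟩
  have hd : 0 < d := by
    rw [hd_def]
    unfold nbrsIn
    rw [Finset.card_pos]
    exact ⟨u0, Finset.mem_filter.2 ⟨hu0, hadj0.symm⟩⟩
  have eq1 := gm_count_lemma G f hf.2 i j U W hPQ1 u0 v0 hu0 hv0
  have eq2 := gm_count_lemma G f hf.2 i j W U hPQ2 u0 v0 hu0 hv0
  rw [← hc_def, ← hd_def] at eq1 eq2
  constructor
  · intro h
    have h1 : (Xset f i ∩ W).card * c < (Xset f i ∩ U).card * c :=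
      (Nat.mul_lt_mul_right hc).2 h
    have h2 : (Xset f j ∩ U).card * d < (Xset f j ∩ W).card * d := by
      calc (Xset f j ∩ U).card * d = (Xset f i ∩ W).card * c := eq2.symm
        _ < (Xset f i ∩ U).card * c := h1
        _ = (Xset f j ∩ W).card * d := eq1
    exact Nat.lt_of_mul_lt_mul_right h2
  · intro h
    have h1 : (Xset f i ∩ U).card * c < (Xset f i ∩ W).card * c :=
      (Nat.mul_lt_mul_right hc).2 h
    have h2 : (Xset f j ∩ W).card * d < (Xset f j ∩ U).card * d := by
      calc (Xset f j ∩ W).card * d = (Xset f i ∩ U).card * c := eq1.symm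
        _ < (Xset f i ∩ W).card * c := h1
        _ = (Xset f j ∩ U).card * d := eq2
    exact Nat.lt_of_mul_lt_mul_right h2
end

section
/- Let G be a finite (d_u, d_w)-regular bipartite graph with bipartition (U, W) and let {X_1, …, X_ℓ, Y} be a Godsil–McKay switching partition of its vertex set. Let X_i be of Type 3 and let y ∈ Y have at least one neighbor in X_i. Then y has exactly |X_i|/2 neighbors in X_i, and either all of these neighbors lie in X_i^1 or all of them lie in X_i^2 (y cannot have neighbors in both X_i^1 and X_i^2). -/
open Finset SimpleGraph Polynomial

/-- Property P4: in a `(du, dw)`-regular bipartite graph with a Godsil–McKay switching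
partition, if `X_i` is of Type 3 and `y ∈ Y` has at least one neighbor in `X_i`, then `y`
has exactly `|X_i|/2` neighbors in `X_i`, and either all of these neighbors lie in
`X_i ∩ U` or all of them lie in `X_i ∩ W`. -/
theorem gm_type3_neighbors_in_one_side {V : Type*} [Fintype V] [DecidableEq V]
    (G : SimpleGraph V) (U W : Finset V) (du dw : ℕ)
    (hG : IsBiRegularBipartition G U W du dw)
    {ℓ : ℕ} (f : V → Option (Fin ℓ)) (hf : IsGMPartition G f)
    (i : Fin ℓ)
    (h3 : (Xset f i ∩ U).Nonempty ∧ (Xset f i ∩ W).Nonempty)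
    (y : V) (hy : y ∈ Yset f) (hnbr : 1 ≤ nbrsIn G y (Xset f i)) :
    2 * nbrsIn G y (Xset f i) = (Xset f i).card ∧
    ((∀ v ∈ Xset f i, G.Adj y v → v ∈ U) ∨ (∀ v ∈ Xset f i, G.Adj y v → v ∈ W)) := by
  classical
  obtain ⟨hUW, hdisj, hadj, -, -⟩ := hG
  obtain ⟨⟨xu, hxu⟩, ⟨xw, hxw⟩⟩ := h3
  obtain ⟨hxuX, hxuU⟩ := Finset.mem_inter.mp hxu
  obtain ⟨hxwX, hxwW⟩ := Finset.mem_inter.mp hxw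
  have hdisj' : ∀ v, v ∈ U → v ∈ W → False := by
    intro v h1 h2
    have : v ∈ U ∩ W := Finset.mem_inter.mpr ⟨h1, h2⟩
    rw [hdisj] at this
    exact absurd this (Finset.notMem_empty v)
  have hyUW : y ∈ U ∨ y ∈ W := by
    have : y ∈ U ∪ W := hUW ▸ Finset.mem_univ y
    exact Finset.mem_union.mp this
  have hfull : nbrsIn G y (Xset f i) ≠ (Xset f i).card := by
    intro hcard
    unfold nbrsIn at hcard
    have hall : ∀ v ∈ Xset f i, G.Adj y v := fun v hv =>
      Finset.filter_card_eq hcard v hv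
    rcases hyUW with hyU | hyW
    · rcases hadj y xu (hall xu hxuX) with ⟨-, h⟩ | ⟨h, -⟩
      · exact hdisj' xu hxuU h
      · exact hdisj' y hyU h
    · rcases hadj y xw (hall xw hxwX) with ⟨h, -⟩ | ⟨-, h⟩
      · exact hdisj' y h hyW
      · exact hdisj' xw h hxwW
  constructor
  · rcases hf.1 y hy i with h0 | hhalf | hful
    · omega
    · exact hhalf
    · exact absurd hful hfull
  · rcases hyUW with hyU | hyW
    · right
      intro v hv hadjv
      rcases hadj y v hadjv with ⟨-, h⟩ | ⟨h, -⟩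
      · exact h
      · exact absurd hyU (fun hu => hdisj' y hu h)
    · left
      intro v hv hadjv
      rcases hadj y v hadjv with ⟨h, -⟩ | ⟨-, h⟩
      · exact absurd h (fun hu => hdisj' y hu hyW)
      · exact h
end
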